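/- Let C be an A-coring, D a B-coring, and Γ = ((M,m),(N,n),η,ρ) a wide right Morita context in REM(Bim) from (D:B) to (C:A): here η : C ⊗_A M ⊗_B N → A and ρ : D ⊗_B N ⊗_A M → B are bilinear 2-cells satisfying equations (I-1),(I-2),(II-1),(II-2). For a right C-comodule (X, ρ^X), define η̃_X : X ⊗_A M ⊗_B N → X as the composite (X ⊗ η) ∘ (ρ^X ⊗ M ⊗ N) followed by X ⊗_A A ≅ X. Then η̃_X is right C-colinear, where X ⊗_A M ⊗_B N carries the composite push-out comodule structure ρ^{X⊗M⊗N} = (X ⊗ M ⊗ n) ∘ (X ⊗ m ⊗ N) ∘ (ρ^X ⊗ M ⊗ N). -/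
import Mathlib


/-!
STATEMENT 12: colinearity of η̃_X.  As in STATEMENTS 10 and 11, `REM(Bim)` is
formalized as the Eilenberg–Moore bicategory of comonads in an arbitrary
bicategory `𝔅`.  A wide right Morita context in `REM(Bim)` from `(D : b)` to
`(C : a)` consists of 1-cells `(M, m)`, `(N, n)` and 2-cells
`η : C ≫ (M ≫ N) ⟶ 𝟙 a`, `ρ : D ≫ (N ≫ M) ⟶ 𝟙 b` satisfying equations
(I-1), (I-2), (II-1), (II-2).  For a right `C`-comodule `(X, x)`, the 2-cell
`η̃_X = (X ⊗ η) ∘ (ρ^X ⊗ M ⊗ N)` (composed with `X ⊗ A ≅ X`) is right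
`C`-colinear for the composite push-out comodule structure on `X ≫ (M ≫ N)`.
-/

open CategoryTheory Bicategory

/-- The composite `C ⊗ M ⊗ N ⟶ M ⊗ N ⊗ C` built from `m` and `n`
(the comparison 2-cell for the composite 1-cell `(M, m)(N, n)`). -/
def midmap {𝔅 : Type*} [Bicategory 𝔅] {a b : 𝔅} {C : a ⟶ a} {D : b ⟶ b}
    {M : a ⟶ b} {N : b ⟶ a} (m : C ≫ M ⟶ M ≫ D) (n : D ≫ N ⟶ N ≫ C) :
    C ≫ (M ≫ N) ⟶ (M ≫ N) ≫ C :=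
  (α_ C M N).inv ≫ (m ▷ N) ≫ (α_ M D N).hom ≫ (M ◁ n) ≫ (α_ M N C).inv

theorem wideMorita_stmt12 {𝔅 : Type*} [Bicategory 𝔅] {a b z : 𝔅}
    -- the `A`-coring `C`
    (C : a ⟶ a) (ΔC : C ⟶ C ≫ C) (εC : C ⟶ 𝟙 a)
    (hC_coassoc : ΔC ≫ (ΔC ▷ C) ≫ (α_ C C C).hom = ΔC ≫ (C ◁ ΔC))
    (hC_counit_l : ΔC ≫ (εC ▷ C) ≫ (λ_ C).hom = 𝟙 C)
    (hC_counit_r : ΔC ≫ (C ◁ εC) ≫ (ρ_ C).hom = 𝟙 C)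
    -- the `B`-coring `D`
    (D : b ⟶ b) (ΔD : D ⟶ D ≫ D) (εD : D ⟶ 𝟙 b)
    (hD_coassoc : ΔD ≫ (ΔD ▷ D) ≫ (α_ D D D).hom = ΔD ≫ (D ◁ ΔD))
    (hD_counit_l : ΔD ≫ (εD ▷ D) ≫ (λ_ D).hom = 𝟙 D)
    (hD_counit_r : ΔD ≫ (D ◁ εD) ≫ (ρ_ D).hom = 𝟙 D)
    -- the 1-cells `(M, m)` and `(N, n)`
    (M : a ⟶ b) (m : C ≫ M ⟶ M ≫ D)
    (hm1 : m ≫ (M ◁ εD) ≫ (ρ_ M).hom = (εC ▷ M) ≫ (λ_ M).hom)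
    (hm2 : (ΔC ▷ M) ≫ (α_ C C M).hom ≫ (C ◁ m) ≫ (α_ C M D).inv ≫ (m ▷ D) ≫
      (α_ M D D).hom = m ≫ (M ◁ ΔD))
    (N : b ⟶ a) (n : D ≫ N ⟶ N ≫ C)
    (hn1 : n ≫ (N ◁ εC) ≫ (ρ_ N).hom = (εD ▷ N) ≫ (λ_ N).hom)
    (hn2 : (ΔD ▷ N) ≫ (α_ D D N).hom ≫ (D ◁ n) ≫ (α_ D N C).inv ≫ (n ▷ C) ≫
      (α_ N C C).hom = n ≫ (N ◁ ΔC))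
    -- the 2-cells `η` and `ρ` of the wide right Morita context
    (η : C ≫ (M ≫ N) ⟶ 𝟙 a) (ρ : D ≫ (N ≫ M) ⟶ 𝟙 b)
    -- equation (I-1)
    (hI1 : (ΔC ▷ (M ≫ N)) ≫ (α_ C C (M ≫ N)).hom ≫ (C ◁ midmap m n) ≫
        (α_ C (M ≫ N) C).inv ≫ (η ▷ C) ≫ (λ_ C).hom =
      (ΔC ▷ (M ≫ N)) ≫ (α_ C C (M ≫ N)).hom ≫ (C ◁ η) ≫ (ρ_ C).hom)
    -- equation (I-2)
    (hI2 : (ΔD ▷ (N ≫ M)) ≫ (α_ D D (N ≫ M)).hom ≫ (D ◁ midmap n m) ≫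
        (α_ D (N ≫ M) D).inv ≫ (ρ ▷ D) ≫ (λ_ D).hom =
      (ΔD ▷ (N ≫ M)) ≫ (α_ D D (N ≫ M)).hom ≫ (D ◁ ρ) ≫ (ρ_ D).hom)
    -- equation (II-1)
    (hII1 : (η ▷ M) ≫ (λ_ M).hom =
      (α_ C (M ≫ N) M).hom ≫ (C ◁ (α_ M N M).hom) ≫ (α_ C M (N ≫ M)).inv ≫
        (m ▷ (N ≫ M)) ≫ (α_ M D (N ≫ M)).hom ≫ (M ◁ ρ) ≫ (ρ_ M).hom)
    -- equation (II-2)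
    (hII2 : (ρ ▷ N) ≫ (λ_ N).hom =
      (α_ D (N ≫ M) N).hom ≫ (D ◁ (α_ N M N).hom) ≫ (α_ D N (M ≫ N)).inv ≫
        (n ▷ (M ≫ N)) ≫ (α_ N C (M ≫ N)).hom ≫ (N ◁ η) ≫ (ρ_ N).hom)
    -- a right `C`-comodule `(X, ρ^X)`
    (X : z ⟶ a) (x : X ⟶ X ≫ C)
    (hx_counit : x ≫ (X ◁ εC) ≫ (ρ_ X).hom = 𝟙 X)
    (hx_coassoc : x ≫ (x ▷ C) ≫ (α_ X C C).hom = x ≫ (X ◁ ΔC)) :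
    -- the 2-cell `η̃_X` ...
    letI etaX : X ≫ (M ≫ N) ⟶ X :=
      (x ▷ (M ≫ N)) ≫ (α_ X C (M ≫ N)).hom ≫ (X ◁ η) ≫ (ρ_ X).hom
    -- ... is right `C`-colinear for the push-out coaction on `X ≫ (M ≫ N)`:
    letI rXMN : X ≫ (M ≫ N) ⟶ (X ≫ (M ≫ N)) ≫ C :=
      (x ▷ (M ≫ N)) ≫ (α_ X C (M ≫ N)).hom ≫ (X ◁ midmap m n) ≫
        (α_ X (M ≫ N) C).inv
    etaX ≫ x = rXMN ≫ (etaX ▷ C) := by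
  have hx2 : x ≫ (x ▷ C) = x ≫ (X ◁ ΔC) ≫ (α_ X C C).inv := by
    rw [← cancel_mono (α_ X C C).hom]
    simpa using hx_coassoc
  have L : ((x ▷ (M ≫ N)) ≫ (α_ X C (M ≫ N)).hom ≫ (X ◁ η) ≫ (ρ_ X).hom) ≫ x =
      (x ▷ (M ≫ N)) ≫ (α_ X C (M ≫ N)).hom ≫
        (X ◁ ((ΔC ▷ (M ≫ N)) ≫ (α_ C C (M ≫ N)).hom ≫ (C ◁ η) ≫ (ρ_ C).hom)) := by
    calc ((x ▷ (M ≫ N)) ≫ (α_ X C (M ≫ N)).hom ≫ (X ◁ η) ≫ (ρ_ X).hom) ≫ x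
        = (x ▷ (M ≫ N)) ≫ (α_ X C (M ≫ N)).hom ≫ (X ◁ η) ≫ (x ▷ 𝟙 a) ≫
            (ρ_ (X ≫ C)).hom := by
          rw [rightUnitor_naturality]; simp
      _ = (x ▷ (M ≫ N)) ≫ (α_ X C (M ≫ N)).hom ≫ (x ▷ (C ≫ (M ≫ N))) ≫
            ((X ≫ C) ◁ η) ≫ (ρ_ (X ≫ C)).hom := by
          rw [whisker_exchange_assoc]
      _ = (x ▷ (M ≫ N)) ≫ ((x ▷ C) ▷ (M ≫ N)) ≫ (α_ (X ≫ C) C (M ≫ N)).hom ≫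
            ((X ≫ C) ◁ η) ≫ (ρ_ (X ≫ C)).hom := by
          rw [← associator_naturality_left_assoc]
      _ = ((x ≫ (X ◁ ΔC) ≫ (α_ X C C).inv) ▷ (M ≫ N)) ≫
            (α_ (X ≫ C) C (M ≫ N)).hom ≫ ((X ≫ C) ◁ η) ≫ (ρ_ (X ≫ C)).hom := by
          rw [← comp_whiskerRight_assoc, hx2]
      _ = (x ▷ (M ≫ N)) ≫ (α_ X C (M ≫ N)).hom ≫
            (X ◁ ((ΔC ▷ (M ≫ N)) ≫ (α_ C C (M ≫ N)).hom ≫ (C ◁ η) ≫ (ρ_ C).hom)) := by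
          bicategory
  have R : ((x ▷ (M ≫ N)) ≫ (α_ X C (M ≫ N)).hom ≫ (X ◁ midmap m n) ≫
        (α_ X (M ≫ N) C).inv) ≫
      (((x ▷ (M ≫ N)) ≫ (α_ X C (M ≫ N)).hom ≫ (X ◁ η) ≫ (ρ_ X).hom) ▷ C) =
      (x ▷ (M ≫ N)) ≫ (α_ X C (M ≫ N)).hom ≫
        (X ◁ ((ΔC ▷ (M ≫ N)) ≫ (α_ C C (M ≫ N)).hom ≫ (C ◁ midmap m n) ≫
          (α_ C (M ≫ N) C).inv ≫ (η ▷ C) ≫ (λ_ C).hom)) := by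
    calc ((x ▷ (M ≫ N)) ≫ (α_ X C (M ≫ N)).hom ≫ (X ◁ midmap m n) ≫
          (α_ X (M ≫ N) C).inv) ≫
        (((x ▷ (M ≫ N)) ≫ (α_ X C (M ≫ N)).hom ≫ (X ◁ η) ≫ (ρ_ X).hom) ▷ C)
        = (x ▷ (M ≫ N)) ≫ (α_ X C (M ≫ N)).hom ≫ (X ◁ midmap m n) ≫
            (x ▷ ((M ≫ N) ≫ C)) ≫ (α_ (X ≫ C) (M ≫ N) C).inv ≫
            ((α_ X C (M ≫ N)).hom ▷ C) ≫ ((X ◁ η) ▷ C) ≫ ((ρ_ X).hom ▷ C) := by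
          simp only [comp_whiskerRight, Category.assoc]
          rw [← associator_inv_naturality_left_assoc]
      _ = (x ▷ (M ≫ N)) ≫ (α_ X C (M ≫ N)).hom ≫ (x ▷ (C ≫ (M ≫ N))) ≫
            ((X ≫ C) ◁ midmap m n) ≫ (α_ (X ≫ C) (M ≫ N) C).inv ≫
            ((α_ X C (M ≫ N)).hom ▷ C) ≫ ((X ◁ η) ▷ C) ≫ ((ρ_ X).hom ▷ C) := by
          rw [whisker_exchange_assoc]
      _ = (x ▷ (M ≫ N)) ≫ ((x ▷ C) ▷ (M ≫ N)) ≫ (α_ (X ≫ C) C (M ≫ N)).hom ≫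
            ((X ≫ C) ◁ midmap m n) ≫ (α_ (X ≫ C) (M ≫ N) C).inv ≫
            ((α_ X C (M ≫ N)).hom ▷ C) ≫ ((X ◁ η) ▷ C) ≫ ((ρ_ X).hom ▷ C) := by
          rw [← associator_naturality_left_assoc]
      _ = ((x ≫ (X ◁ ΔC) ≫ (α_ X C C).inv) ▷ (M ≫ N)) ≫
            (α_ (X ≫ C) C (M ≫ N)).hom ≫
            ((X ≫ C) ◁ midmap m n) ≫ (α_ (X ≫ C) (M ≫ N) C).inv ≫
            ((α_ X C (M ≫ N)).hom ▷ C) ≫ ((X ◁ η) ▷ C) ≫ ((ρ_ X).hom ▷ C) := by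
          rw [← comp_whiskerRight_assoc, hx2]
      _ = (x ▷ (M ≫ N)) ≫ (α_ X C (M ≫ N)).hom ≫
            (X ◁ ((ΔC ▷ (M ≫ N)) ≫ (α_ C C (M ≫ N)).hom ≫ (C ◁ midmap m n) ≫
              (α_ C (M ≫ N) C).inv ≫ (η ▷ C) ≫ (λ_ C).hom)) := by
          bicategory
  show ((x ▷ (M ≫ N)) ≫ (α_ X C (M ≫ N)).hom ≫ (X ◁ η) ≫ (ρ_ X).hom) ≫ x =
    ((x ▷ (M ≫ N)) ≫ (α_ X C (M ≫ N)).hom ≫ (X ◁ midmap m n) ≫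
        (α_ X (M ≫ N) C).inv) ≫
      (((x ▷ (M ≫ N)) ≫ (α_ X C (M ≫ N)).hom ≫ (X ◁ η) ≫ (ρ_ X).hom) ▷ C)
  rw [L, R, hI1]
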